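/- Let λ > 0, 0 < ρ₁ < ρ₂ < λ and ε > 0 with ρ₁ + ε < ρ₂. Define H_ε on the open disk 𝔻_λ = {w ∈ ℂ : |w| < λ} by H_ε(w) = w + ε if |w| < ρ₁, H_ε(w) = w + ε·(ρ₂ − |w|)/(ρ₂ − ρ₁) if ρ₁ ≤ |w| ≤ ρ₂, and H_ε(w) = w if ρ₂ < |w| < λ. Then H_ε is a homeomorphism of 𝔻_λ onto itself (in particular H_ε is well defined, maps 𝔻_λ into 𝔻_λ, is a continuous bijection, and its inverse is continuous), and H_ε equals the identity on the annulus {ρ₂ < |w| < λ}. -/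

import Mathlib

/-- The sliding map `H_ε` of the proof of Theorem 3.2 (relaxing superattracting
cycles): `H_ε(w) = w + ε` for `|w| < ρ₁`, interpolated on `ρ₁ ≤ |w| ≤ ρ₂`, and the
identity for `|w| > ρ₂`. -/
noncomputable def Heps (ρ₁ ρ₂ ε : ℝ) (w : ℂ) : ℂ :=
  if ‖w‖ < ρ₁ then w + (ε : ℂ)
  else if ‖w‖ ≤ ρ₂ then
    w + (ε : ℂ) * (((ρ₂ - ‖w‖) / (ρ₂ - ρ₁) : ℝ) : ℂ)
  else w

theorem Heps_homeomorph_of_disk (lam ρ₁ ρ₂ ε : ℝ)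
    (h₁ : 0 < ρ₁) (h₂ : ρ₁ < ρ₂) (h₃ : ρ₂ < lam) (hε : 0 < ε) (hρε : ρ₁ + ε < ρ₂) :
    Set.MapsTo (Heps ρ₁ ρ₂ ε) (Metric.ball (0 : ℂ) lam) (Metric.ball (0 : ℂ) lam) ∧
    (∃ h : (Metric.ball (0 : ℂ) lam) ≃ₜ (Metric.ball (0 : ℂ) lam),
      ∀ w : Metric.ball (0 : ℂ) lam, (h w : ℂ) = Heps ρ₁ ρ₂ ε (w : ℂ)) ∧
    (∀ w : ℂ, ρ₂ < ‖w‖ → ‖w‖ < lam → Heps ρ₁ ρ₂ ε w = w) := by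
  have hρ : (0:ℝ) < ρ₂ - ρ₁ := by linarith
  set f := Heps ρ₁ ρ₂ ε with hf
  set g : ℝ → ℝ := fun r => max 0 (min 1 ((ρ₂ - r) / (ρ₂ - ρ₁))) with hg
  -- pointwise formula
  have hfg : ∀ w : ℂ, f w = w + (ε:ℂ) * ((g (‖w‖) : ℝ) : ℂ) := by
    intro w
    simp only [hf, hg, Heps]
    rcases lt_or_ge (‖w‖) ρ₁ with h | h
    · rw [if_pos h]
      have h1 : (1:ℝ) ≤ (ρ₂ - ‖w‖) / (ρ₂ - ρ₁) := by
        rw [le_div_iff₀ hρ]; linarith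
      rw [min_eq_left h1, max_eq_right zero_le_one]
      norm_num
    · rw [if_neg (not_lt.2 h)]
      rcases le_or_gt (‖w‖) ρ₂ with h2 | h2
      · have hle : (ρ₂ - ‖w‖) / (ρ₂ - ρ₁) ≤ 1 := by
          rw [div_le_one hρ]; linarith
        have hge : (0:ℝ) ≤ (ρ₂ - ‖w‖) / (ρ₂ - ρ₁) :=
          div_nonneg (by linarith) hρ.le
        rw [if_pos h2, min_eq_right hle, max_eq_right hge]
      · have hv : (ρ₂ - ‖w‖) / (ρ₂ - ρ₁) < 0 :=
          div_neg_of_neg_of_pos (by linarith) hρ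
        rw [if_neg (not_le.2 h2), min_eq_right (by linarith : (ρ₂ - ‖w‖)/(ρ₂-ρ₁) ≤ 1),
          max_eq_left hv.le]
        norm_num
  have hg_nonneg : ∀ r, 0 ≤ g r := fun r => le_max_left _ _
  -- identity outside ρ₂
  have hid : ∀ w : ℂ, ρ₂ ≤ ‖w‖ → f w = w := by
    intro w hw
    have hv : (ρ₂ - ‖w‖) / (ρ₂ - ρ₁) ≤ 0 :=
      div_nonpos_of_nonpos_of_nonneg (by linarith) hρ.le
    have : g (‖w‖) = 0 := by
      rw [hg]
      simp only
      rw [min_eq_right (by linarith : (ρ₂ - ‖w‖)/(ρ₂-ρ₁) ≤ 1), max_eq_left hv]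
    rw [hfg w, this]
    norm_num
  -- maps ball into ball
  have hmaps : ∀ w : ℂ, ‖w‖ < lam → ‖f w‖ < lam := by
    intro w hw
    rcases le_or_gt (‖w‖) ρ₂ with h | h
    · have hgle : g (‖w‖) ≤ (ρ₂ - ‖w‖) / (ρ₂ - ρ₁) := by
        have hge : (0:ℝ) ≤ (ρ₂ - ‖w‖) / (ρ₂ - ρ₁) :=
          div_nonneg (by linarith) hρ.le
        rw [hg]
        simp only
        rw [max_le_iff]
        exact ⟨hge, min_le_right _ _⟩
      have key : ‖w‖ + ε * g (‖w‖) ≤ ρ₂ := by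
        have h1 : ε * g (‖w‖) ≤ (ρ₂ - ρ₁) * ((ρ₂ - ‖w‖) / (ρ₂ - ρ₁)) := by
          apply mul_le_mul (by linarith) hgle (hg_nonneg _) hρ.le
        have h2 : (ρ₂ - ρ₁) * ((ρ₂ - ‖w‖) / (ρ₂ - ρ₁)) = ρ₂ - ‖w‖ := by
          field_simp
        linarith
      calc ‖f w‖ ≤ ‖w‖ + ‖(ε:ℂ) * ((g (‖w‖) : ℝ) : ℂ)‖ := by
            rw [hfg w]; exact norm_add_le _ _
        _ = ‖w‖ + ε * g (‖w‖) := by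
            rw [norm_mul, Complex.norm_real, Complex.norm_real, Real.norm_eq_abs, Real.norm_eq_abs,
              abs_of_pos hε, abs_of_nonneg (hg_nonneg _)]
        _ ≤ ρ₂ := key
        _ < lam := h₃
    · rw [hid w h.le]; exact hw
  -- Lipschitz bound for g
  have hglip : ∀ a b : ℝ, |g a - g b| ≤ |a - b| / (ρ₂ - ρ₁) := by
    intro a b
    have h1 : |g a - g b| ≤ |min 1 ((ρ₂ - a)/(ρ₂-ρ₁)) - min 1 ((ρ₂ - b)/(ρ₂-ρ₁))| := by
      calc |g a - g b| ≤ max |(0:ℝ) - 0| |min 1 ((ρ₂ - a)/(ρ₂-ρ₁)) - min 1 ((ρ₂ - b)/(ρ₂-ρ₁))| :=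
            abs_max_sub_max_le_max _ _ _ _
        _ = _ := by simp
    have h2 : |min 1 ((ρ₂ - a)/(ρ₂-ρ₁)) - min 1 ((ρ₂ - b)/(ρ₂-ρ₁))| ≤
        |(ρ₂ - a)/(ρ₂-ρ₁) - (ρ₂ - b)/(ρ₂-ρ₁)| := by
      calc _ ≤ max |(1:ℝ) - 1| |(ρ₂ - a)/(ρ₂-ρ₁) - (ρ₂ - b)/(ρ₂-ρ₁)| :=
            abs_min_sub_min_le_max _ _ _ _
        _ = _ := by simp
    have h3 : (ρ₂ - a)/(ρ₂-ρ₁) - (ρ₂ - b)/(ρ₂-ρ₁) = (b - a) / (ρ₂ - ρ₁) := by ring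
    have h4 : |(b - a) / (ρ₂ - ρ₁)| = |a - b| / (ρ₂ - ρ₁) := by
      rw [abs_div, abs_of_pos hρ, abs_sub_comm]
    calc |g a - g b| ≤ _ := h1
      _ ≤ _ := h2
      _ = |a - b| / (ρ₂ - ρ₁) := by rw [h3, h4]
  -- the contraction constant
  set k : NNReal := ⟨ε / (ρ₂ - ρ₁), (div_pos hε hρ).le⟩ with hk
  have hA : ApproximatesLinearOn f
      ((ContinuousLinearEquiv.refl ℂ ℂ : ℂ ≃L[ℂ] ℂ) : ℂ →L[ℂ] ℂ) Set.univ k := by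
    intro x _ y _
    simp only [ContinuousLinearEquiv.coe_coe, ContinuousLinearEquiv.refl_apply]
    have heq : f x - f y - (x - y) = (ε:ℂ) * (((g (‖x‖) - g (‖y‖) : ℝ)) : ℂ) := by
      rw [hfg x, hfg y]
      push_cast
      ring
    rw [heq]
    have : ‖(ε:ℂ) * (((g (‖x‖) - g (‖y‖) : ℝ)) : ℂ)‖ =
        ε * |g (‖x‖) - g (‖y‖)| := by
      rw [norm_mul, Complex.norm_real, Complex.norm_real, Real.norm_eq_abs, Real.norm_eq_abs,
        abs_of_pos hε]
    rw [this]
    have hab : |‖x‖ - ‖y‖| ≤ ‖x - y‖ :=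
      abs_norm_sub_norm_le x y
    have : ε * |g (‖x‖) - g (‖y‖)| ≤
        ε * (|‖x‖ - ‖y‖| / (ρ₂ - ρ₁)) :=
      mul_le_mul_of_nonneg_left (hglip _ _) hε.le
    have hnorm : ‖x - y‖ = ‖x - y‖ := rfl
    have hkc : (k : ℝ) = ε / (ρ₂ - ρ₁) := rfl
    rw [hnorm, hkc]
    calc ε * |g (‖x‖) - g (‖y‖)| ≤
        ε * (|‖x‖ - ‖y‖| / (ρ₂ - ρ₁)) := this
      _ = ε / (ρ₂ - ρ₁) * |‖x‖ - ‖y‖| := by ring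
      _ ≤ ε / (ρ₂ - ρ₁) * ‖x - y‖ :=
        mul_le_mul_of_nonneg_left hab (div_pos hε hρ).le
  have hN : ‖(((ContinuousLinearEquiv.refl ℂ ℂ : ℂ ≃L[ℂ] ℂ).symm : ℂ →L[ℂ] ℂ))‖₊ = 1 := by
    simp
  have hc : Subsingleton ℂ ∨
      k < ‖(((ContinuousLinearEquiv.refl ℂ ℂ : ℂ ≃L[ℂ] ℂ).symm : ℂ →L[ℂ] ℂ))‖₊⁻¹ := by
    right
    rw [hN, inv_one]
    rw [← NNReal.coe_lt_coe]
    show ε / (ρ₂ - ρ₁) < (1:ℝ)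
    rw [div_lt_one hρ]
    linarith
  set F : ℂ ≃ₜ ℂ := hA.toHomeomorph f hc with hF
  have hFc : ∀ x : ℂ, F x = f x := fun _ => rfl
  have h_iff : ∀ x : ℂ, x ∈ Metric.ball (0:ℂ) lam ↔ F x ∈ Metric.ball (0:ℂ) lam := by
    intro x
    simp only [mem_ball_zero_iff, hFc]
    constructor
    · exact hmaps x
    · intro hx
      rcases le_or_gt (‖x‖) ρ₂ with h | h
      · linarith
      · rwa [hid x h.le] at hx
  refine ⟨?_, ⟨F.subtype h_iff, fun w => rfl⟩, ?_⟩
  · intro w hw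
    rw [mem_ball_zero_iff] at hw ⊢
    exact hmaps w hw
  · intro w hw _
    exact hid w hw.le
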